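/- Let S_o = I_m + R^{−1}B_o with eigenvalues λ_i(S_o) = 1 + α[1+4L̃_o²sin²(πi/m)]^{M_o}/[1+4L̃_{b/o}²sin²(πi/m)]^{M_b}. If the conditions (i) L̃_o²M_o > L̃_{b/o}²M_b, (ii) M_o < M_b, (iii) L̃_{b/o}²M_b − L̃_o²M_o > 4L̃_{b/o}²L̃_o²(M_o − M_b) do NOT all hold, then κ(S_o) ≤ 1 + α·max{ (1+4L̃_o²)^{M_o}/(1+4L̃_{b/o}²)^{M_b}, 1 }. -/

import Mathlib

open Matrix Polynomial

/-- The (unnormalised-frequency) `i`-th Fourier eigenvector of size-`m` circulant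
matrices: `f^(i)_p = (1/√m) exp(-2πI i p / m)`. -/
noncomputable def fourierVec (m : ℕ) [NeZero m] (i : ZMod m) : ZMod m → ℂ :=
  fun p => (1 / (Real.sqrt m : ℂ)) *
    Complex.exp (-(2 * Real.pi * Complex.I * (i.val : ℂ) * (p.val : ℂ)) / m)

/-- The `i`-th Fourier eigenvalue of a (circulant) matrix `A`, i.e. the `i`-th DFT
coefficient of its first column: `λ_i(A) = Σ_k A k 0 · exp(2πI i k / m)`. -/
noncomputable def fourierEig {m : ℕ} [NeZero m] (A : Matrix (ZMod m) (ZMod m) ℂ)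
    (i : ZMod m) : ℂ :=
  ∑ k : ZMod m, A k 0 * Complex.exp (2 * Real.pi * Complex.I * (i.val : ℂ) * (k.val : ℂ) / m)

/-- A matrix indexed by `ZMod m` is circulant iff it is invariant under simultaneous
cyclic shifts of rows and columns. -/
def IsCirculant {m : ℕ} {α : Type*} (A : Matrix (ZMod m) (ZMod m) α) : Prop :=
  ∀ i j d : ZMod m, A (i + d) (j + d) = A i j

/-- The uniform selection operator `H : ℝ^{m×n}` picking every `ζ`-th component:
`(Hx)_p = x_{ζ p}`. -/
noncomputable def selectionOp (ζ m n : ℕ) [NeZero m] [NeZero n] :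
    Matrix (ZMod m) (ZMod n) ℝ :=
  Matrix.of fun p q => if q.val = ζ * p.val then 1 else 0

/-- The periodic second-difference (Laplacian) matrix with grid spacing `h`,
stencil `(1, -2, 1)/h²` with periodic boundary conditions. -/
noncomputable def lap (m : ℕ) [NeZero m] (h : ℝ) : Matrix (ZMod m) (ZMod m) ℝ :=
  Matrix.of fun i j =>
    ((if i = j then (-2 : ℝ) else 0) + (if i = j + 1 then 1 else 0) +
      (if j = i + 1 then 1 else 0)) / h ^ 2

/-- The diffusion-modelled covariance matrix
`(σ² ν L / h) (I - L² Δ_h)^{-M}` on an `m`-point periodic grid. -/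
noncomputable def diffCov (m : ℕ) [NeZero m] (σ ν L h : ℝ) (M : ℕ) :
    Matrix (ZMod m) (ZMod m) ℝ :=
  (σ ^ 2 * ν * L / h) • ((1 - (L ^ 2) • lap m h) ^ M)⁻¹

/-- The spectral condition number `κ(A) = λ_max(A)/λ_min(A)` (via the real spectrum). -/
noncomputable def condNum {k : Type*} [Fintype k] [DecidableEq k]
    (A : Matrix k k ℝ) : ℝ :=
  sSup (spectrum ℝ A) / sInf (spectrum ℝ A)

section AnalyticAux
open Set

lemma hasDerivG (a b : ℝ) (hb : 0 < b) (n p : ℕ) (x : ℝ) (hx : 0 ≤ x) :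
    HasDerivAt (fun y => (1+a*y)^(n+1) / (1+b*y)^(p+1))
      ((1+a*x)^n * (1+b*x)^p * ((a*(n+1) - b*(p+1)) + a*b*(((n:ℝ)+1)-((p:ℝ)+1))*x)
        / ((1+b*x)^(p+1))^2) x := by
  have hbx : (0:ℝ) < 1 + b*x := by nlinarith
  have hu : HasDerivAt (fun y : ℝ => (1+a*y)^(n+1)) ((n+1 : ℕ) * (1+a*x)^n * a) x := by
    have h1 : HasDerivAt (fun y : ℝ => 1+a*y) a x := by
      simpa using ((hasDerivAt_id x).const_mul a).const_add 1
    simpa using (h1.fun_pow (n+1))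
  have hv : HasDerivAt (fun y : ℝ => (1+b*y)^(p+1)) ((p+1 : ℕ) * (1+b*x)^p * b) x := by
    have h1 : HasDerivAt (fun y : ℝ => 1+b*y) b x := by
      simpa using ((hasDerivAt_id x).const_mul b).const_add 1
    simpa using (h1.fun_pow (p+1))
  have := hu.fun_div hv (by positivity)
  refine this.congr_deriv ?_
  push_cast
  ring

lemma monoG (a b : ℝ) (ha : 0 < a) (hb : 0 < b) (n p : ℕ) (u v : ℝ)
    (hu : 0 ≤ u) (huv : u ≤ v)
    (hφ : ∀ x ∈ Icc u v, 0 ≤ (a*((n:ℝ)+1) - b*((p:ℝ)+1)) + a*b*(((n:ℝ)+1)-((p:ℝ)+1))*x) :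
    MonotoneOn (fun y => (1+a*y)^(n+1) / (1+b*y)^(p+1)) (Icc u v) := by
  apply monotoneOn_of_deriv_nonneg (convex_Icc u v)
  · apply ContinuousOn.div
    · fun_prop
    · fun_prop
    · intro x hx
      have : (0:ℝ) < 1 + b*x := by nlinarith [hx.1]
      positivity
  · intro x hx
    rw [interior_Icc] at hx
    exact ((hasDerivG a b hb n p x (le_trans hu hx.1.le)).differentiableAt).differentiableWithinAt
  · intro x hx
    rw [interior_Icc] at hx
    have hx0 : 0 ≤ x := le_trans hu hx.1.le
    rw [(hasDerivG a b hb n p x hx0).deriv]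
    have h1 : (0:ℝ) < 1 + a*x := by nlinarith
    have h2 : (0:ℝ) < 1 + b*x := by nlinarith
    have h3 := hφ x ⟨hx.1.le, hx.2.le⟩
    positivity

lemma antiG (a b : ℝ) (ha : 0 < a) (hb : 0 < b) (n p : ℕ) (u v : ℝ)
    (hu : 0 ≤ u) (huv : u ≤ v)
    (hφ : ∀ x ∈ Icc u v, (a*((n:ℝ)+1) - b*((p:ℝ)+1)) + a*b*(((n:ℝ)+1)-((p:ℝ)+1))*x ≤ 0) :
    AntitoneOn (fun y => (1+a*y)^(n+1) / (1+b*y)^(p+1)) (Icc u v) := by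
  apply antitoneOn_of_deriv_nonpos (convex_Icc u v)
  · apply ContinuousOn.div
    · fun_prop
    · fun_prop
    · intro x hx
      have : (0:ℝ) < 1 + b*x := by nlinarith [hx.1]
      positivity
  · intro x hx
    rw [interior_Icc] at hx
    exact ((hasDerivG a b hb n p x (le_trans hu hx.1.le)).differentiableAt).differentiableWithinAt
  · intro x hx
    rw [interior_Icc] at hx
    have hx0 : 0 ≤ x := le_trans hu hx.1.le
    rw [(hasDerivG a b hb n p x hx0).deriv]
    have h1 : (0:ℝ) < 1 + a*x := by nlinarith
    have h2 : (0:ℝ) < 1 + b*x := by nlinarith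
    have h3 := hφ x ⟨hx.1.le, hx.2.le⟩
    have h4 : (0:ℝ) ≤ (1+a*x)^n * (1+b*x)^p := by positivity
    have h5 : (0:ℝ) < ((1+b*x)^(p+1))^2 := by positivity
    apply div_nonpos_of_nonpos_of_nonneg _ h5.le
    exact mul_nonpos_of_nonneg_of_nonpos h4 h3

lemma gBound (a b : ℝ) (ha : 0 < a) (hb : 0 < b) (Mo Mb : ℕ) (hMo : 0 < Mo) (hMb : 0 < Mb)
    (h : ¬(0 < a*Mo - b*Mb ∧ a*Mo - b*Mb + a*b*((Mo:ℝ)-(Mb:ℝ)) < 0)) :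
    ∀ x ∈ Set.Icc (0:ℝ) 1, (1+a*x)^Mo / (1+b*x)^Mb ≤ max ((1+a)^Mo / (1+b)^Mb) 1 := by
  obtain ⟨n, rfl⟩ : ∃ n, Mo = n+1 := ⟨Mo-1, (Nat.succ_pred_eq_of_pos hMo).symm⟩
  obtain ⟨p, rfl⟩ : ∃ p, Mb = p+1 := ⟨Mb-1, (Nat.succ_pred_eq_of_pos hMb).symm⟩
  set c : ℝ := a*((n:ℝ)+1) - b*((p:ℝ)+1) with hc
  set d : ℝ := a*b*(((n:ℝ)+1)-((p:ℝ)+1)) with hd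
  have h' : ¬(0 < c ∧ c + d < 0) := by
    intro ⟨h1, h2⟩; exact h ⟨by push_cast; linarith, by push_cast; linarith⟩
  set g : ℝ → ℝ := fun y => (1+a*y)^(n+1) / (1+b*y)^(p+1) with hg
  have hg0 : g 0 = 1 := by simp [hg]
  have hg1 : g 1 = (1+a)^(n+1) / (1+b)^(p+1) := by simp [hg]
  intro x hx
  rcases le_or_gt c 0 with hc0 | hc0
  · rcases le_or_gt (c + d) 0 with hcd | hcd
    · -- antitone on [0,1]
      have := antiG a b ha hb n p 0 1 le_rfl zero_le_one (fun y hy => by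
        nlinarith [hy.1, hy.2])
      calc g x ≤ g 0 := this (left_mem_Icc.2 zero_le_one) hx hx.1
        _ ≤ _ := by rw [hg0]; exact le_max_right _ _
    · -- d > 0, x0 = -c/d
      have hdpos : 0 < d := by linarith
      set x0 : ℝ := -c/d with hx0
      have hx00 : 0 ≤ x0 := div_nonneg (by linarith) hdpos.le
      have hx01 : x0 ≤ 1 := by rw [div_le_one hdpos]; linarith
      have hroot : d * x0 = -c := by rw [hx0, mul_comm, div_mul_cancel₀ _ hdpos.ne']
      rcases le_or_gt x x0 with hxx | hxx
      · have := antiG a b ha hb n p 0 x0 le_rfl hx00 (fun y hy => by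
          nlinarith [hy.1, hy.2])
        calc g x ≤ g 0 := this (left_mem_Icc.2 hx00) ⟨hx.1, hxx⟩ hx.1
          _ ≤ _ := by rw [hg0]; exact le_max_right _ _
      · have := monoG a b ha hb n p x0 1 hx00 hx01 (fun y hy => by
          nlinarith [hy.1, hy.2])
        calc g x ≤ g 1 := this ⟨hxx.le, hx.2⟩ (right_mem_Icc.2 hx01) hx.2
          _ ≤ _ := by rw [hg1]; exact le_max_left _ _
  · have hcd : 0 ≤ c + d := by by_contra hcon; exact h' ⟨hc0, by linarith⟩
    have := monoG a b ha hb n p 0 1 le_rfl zero_le_one (fun y hy => by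
      nlinarith [hy.1, hy.2])
    calc g x ≤ g 1 := this hx (right_mem_Icc.2 zero_le_one) hx.2
      _ ≤ _ := by rw [hg1]; exact le_max_left _ _

end AnalyticAux

namespace Stmt12Aux


variable (m : ℕ) [NeZero m]

noncomputable def w : ℂ := Complex.exp (2 * Real.pi * Complex.I / m)

lemma w_pow_m : w m ^ m = 1 := by
  rw [w, ← Complex.exp_nat_mul]
  rw [mul_div_cancel₀ _ (by exact_mod_cast (NeZero.ne m))]
  exact Complex.exp_two_pi_mul_I

omit [NeZero m] in
lemma w_ne : w m ≠ 0 := Complex.exp_ne_zero _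

lemma w_pow_mod (a : ℕ) : w m ^ a = w m ^ (a % m) := by
  conv_lhs => rw [← Nat.div_add_mod a m]
  rw [pow_add, pow_mul, w_pow_m, one_pow, one_mul]

lemma w_pow_congr {a b : ℕ} (h : (a : ZMod m) = b) : w m ^ a = w m ^ b := by
  rw [ZMod.natCast_eq_natCast_iff] at h
  have h2 : a % m = b % m := h
  rw [w_pow_mod m a, w_pow_mod m b, h2]

lemma w_pow_pow (k : ℕ) : (w m ^ k) ^ m = 1 := by
  rw [← pow_mul, mul_comm, pow_mul, w_pow_m, one_pow]

/-- Fourier matrix: columns are eigenvectors. -/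
noncomputable def F : Matrix (ZMod m) (ZMod m) ℂ :=
  Matrix.of fun p i => w m ^ (i.val * p.val)

/-- Inverse Fourier matrix. -/
noncomputable def G : Matrix (ZMod m) (ZMod m) ℂ :=
  Matrix.of fun i q => (m : ℂ)⁻¹ * (w m ^ (q.val * i.val))⁻¹

lemma geom_sum' (z : ℂ) (hz : z ^ m = 1) :
    ∑ i : ZMod m, z ^ i.val = if z = 1 then (m : ℂ) else 0 := by
  have h1 : ∑ i : ZMod m, z ^ i.val = ∑ j ∈ Finset.range m, z ^ j := by
    apply Finset.sum_nbij' (fun i : ZMod m => i.val) (fun j : ℕ => (j : ZMod m))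
    · intro i _; exact Finset.mem_range.2 (ZMod.val_lt i)
    · intro j _; exact Finset.mem_univ _
    · intro i _; exact ZMod.natCast_rightInverse i
    · intro j hj; exact ZMod.val_cast_of_lt (Finset.mem_range.1 hj)
    · intro i _; rfl
  rw [h1]
  split_ifs with h
  · simp [h]
  · rw [geom_sum_eq h m, hz, sub_self, zero_div]

lemma FG : F m * G m = 1 := by
  ext p q
  rw [Matrix.mul_apply, Matrix.one_apply]
  have hz : (w m ^ p.val * (w m ^ q.val)⁻¹) ^ m = 1 := by
    rw [mul_pow, inv_pow, w_pow_pow, w_pow_pow, inv_one, mul_one]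
  have key : ∀ i : ZMod m, (F m) p i * (G m) i q
      = (m : ℂ)⁻¹ * (w m ^ p.val * (w m ^ q.val)⁻¹) ^ i.val := by
    intro i
    simp only [F, G, Matrix.of_apply]
    rw [mul_pow, inv_pow, ← pow_mul, ← pow_mul, mul_comm p.val i.val]
    ring
  rw [Finset.sum_congr rfl (fun i _ => key i), ← Finset.mul_sum, geom_sum' m _ hz]
  have hm : (m : ℂ) ≠ 0 := by exact_mod_cast (NeZero.ne m)
  by_cases hpq : p = q
  · subst hpq
    simp [mul_inv_cancel₀ (pow_ne_zero _ (w_ne m)), hm]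
  · have hne : w m ^ p.val * (w m ^ q.val)⁻¹ ≠ 1 := by
      intro hcon
      rw [mul_inv_eq_one₀ (pow_ne_zero _ (w_ne m))] at hcon
      have heq := hcon
      have hprim := Complex.isPrimitiveRoot_exp m (NeZero.ne m)
      exact hpq (ZMod.val_injective m (hprim.pow_inj (ZMod.val_lt p) (ZMod.val_lt q) heq))
    simp [hne, hpq]

lemma GF : G m * F m = 1 := mul_eq_one_comm.1 (FG m)

lemma F_shift (i p q : ZMod m) :
    w m ^ (i.val * (p + q).val) = w m ^ (i.val * p.val) * w m ^ (i.val * q.val) := by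
  rw [← pow_add]
  apply w_pow_congr
  push_cast [ZMod.natCast_val, ZMod.cast_id]
  ring

/-- per-step phase -/
noncomputable def e (i : ZMod m) : ℂ := w m ^ (i.val * (1 : ZMod m).val)

lemma e_ne (i : ZMod m) : e m i ≠ 0 := pow_ne_zero _ (Complex.exp_ne_zero _)

lemma e_inv (i : ZMod m) : w m ^ (i.val * (-1 : ZMod m).val) = (e m i)⁻¹ := by
  have h := F_shift m i 1 (-1)
  rw [add_neg_cancel] at h
  simp only [ZMod.val_zero, mul_zero, pow_zero] at h
  rw [e]
  exact eq_inv_of_mul_eq_one_right h.symm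

/-- the angle -/
noncomputable def θ (i : ZMod m) : ℝ :=
  2 * Real.pi * (i.val * (1 : ZMod m).val) / m

/-- the normalized eigenvalue `sin²`-value in `[0,1]` -/
noncomputable def s (i : ZMod m) : ℝ := (2 - 2 * Real.cos (θ m i)) / 4

lemma s_mem (i : ZMod m) : s m i ∈ Set.Icc (0:ℝ) 1 := by
  have h1 := Real.cos_le_one (θ m i)
  have h2 := Real.neg_one_le_cos (θ m i)
  constructor <;> [skip; skip] <;> · simp only [s]; nlinarith

lemma e_exp (i : ZMod m) : e m i = Complex.exp ((θ m i : ℝ) * Complex.I) := by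
  rw [e, w, ← Complex.exp_nat_mul, θ]
  congr 1
  push_cast
  have hm : (m : ℂ) ≠ 0 := by exact_mod_cast (NeZero.ne m)
  field_simp

lemma e_add_inv (i : ZMod m) :
    e m i + (e m i)⁻¹ - 2 = ((-4 * s m i : ℝ) : ℂ) := by
  rw [e_exp, ← Complex.exp_neg]
  have h1 : -((θ m i : ℂ) * Complex.I) = ((-θ m i : ℝ) : ℂ) * Complex.I := by
    push_cast; ring
  rw [h1, Complex.exp_mul_I, Complex.exp_mul_I]
  push_cast [s]
  rw [Complex.cos_neg, Complex.sin_neg, ← Complex.ofReal_cos]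
  push_cast
  ring

/-- row-sum lemma for the Laplacian stencil -/
lemma row_sum (h2 : ℂ) (p : ZMod m) (v : ZMod m → ℂ) :
    ∑ k : ZMod m, (((if p = k then (-2:ℂ) else 0) + (if p = k + 1 then 1 else 0) +
        (if k = p + 1 then 1 else 0)) / h2) * v k
      = (v (p-1) + v (p+1) - 2 * v p) / h2 := by
  have hc1 : ∀ k : ZMod m, (p = k) ↔ (k = p) := fun k => eq_comm
  have hc2 : ∀ k : ZMod m, (p = k + 1) ↔ (k = p - 1) := by
    intro k
    constructor
    · intro h; rw [h]; ring
    · intro h; rw [h]; ring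
  have key : ∀ k : ZMod m, (((if p = k then (-2:ℂ) else 0) + (if p = k + 1 then 1 else 0) +
        (if k = p + 1 then 1 else 0)) / h2) * v k
      = (if k = p then -2 * v k / h2 else 0) + (if k = p - 1 then v k / h2 else 0) +
        (if k = p + 1 then v k / h2 else 0) := by
    intro k
    rw [if_congr (hc1 k) rfl rfl, if_congr (hc2 k) rfl rfl]
    by_cases h1 : k = p <;> by_cases hh2 : k = p - 1 <;> by_cases h3 : k = p + 1 <;>
      simp [h1, hh2, h3] <;> split_ifs <;> ring
  rw [Finset.sum_congr rfl (fun k _ => key k)]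
  rw [Finset.sum_add_distrib, Finset.sum_add_distrib]
  simp only [Finset.sum_ite_eq', Finset.mem_univ, if_true]
  ring

/-- Laplacian diagonalization. -/
lemma lapF (h : ℝ) (hh : h ≠ 0) :
    ((lap m h).map Complex.ofReal) * F m
      = F m * Matrix.diagonal (fun i => ((-4 * s m i / h ^ 2 : ℝ) : ℂ)) := by
  ext p i
  rw [Matrix.mul_apply, Matrix.mul_diagonal]
  have hmap : ∀ k : ZMod m, ((lap m h).map Complex.ofReal) p k
      = ((if p = k then (-2:ℂ) else 0) + (if p = k + 1 then 1 else 0) +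
        (if k = p + 1 then 1 else 0)) / ((h:ℂ)^2) := by
    intro k
    simp only [Matrix.map_apply, lap, Matrix.of_apply]
    push_cast [apply_ite Complex.ofReal]
    rfl
  rw [Finset.sum_congr rfl (fun k _ => by rw [hmap k])]
  rw [row_sum m ((h:ℂ)^2) p (fun k => F m k i)]
  have hFm1 : F m (p - 1) i = F m p i * (e m i)⁻¹ := by
    have h' := F_shift m i p (-1)
    rw [e_inv] at h'
    have h'' : F m (p - 1) i = w m ^ (i.val * (p + -1).val) := by rw [sub_eq_add_neg]; rfl
    rw [h'', h']; rfl
  have hFp1 : F m (p + 1) i = F m p i * e m i := by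
    have h' := F_shift m i p 1
    exact h'
  rw [hFm1, hFp1]
  rw [show ((-4 * s m i / h^2 : ℝ):ℂ) = ((-4 * s m i : ℝ):ℂ)/((h:ℂ)^2) by push_cast; ring]
  rw [← e_add_inv m i]
  have hch : (h : ℂ) ≠ 0 := Complex.ofReal_ne_zero.2 hh
  field_simp
  ring


lemma conj_pow (A : Matrix (ZMod m) (ZMod m) ℂ) (d : ZMod m → ℂ)
    (hA : A * F m = F m * Matrix.diagonal d) (M : ℕ) :
    A ^ M * F m = F m * Matrix.diagonal (fun i => d i ^ M) := by
  induction M with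
  | zero => simp [Matrix.diagonal_one]
  | succ M ih =>
    rw [pow_succ, Matrix.mul_assoc, hA, ← Matrix.mul_assoc, ih, Matrix.mul_assoc,
      Matrix.diagonal_mul_diagonal]
    simp [pow_succ]

lemma det_of_eig (A : Matrix (ZMod m) (ZMod m) ℂ) (d : ZMod m → ℂ)
    (hA : A * F m = F m * Matrix.diagonal d) : A.det = ∏ i, d i := by
  have h1 : A = F m * Matrix.diagonal d * G m := by
    rw [← hA, Matrix.mul_assoc, FG, Matrix.mul_one]
  have h2 : (F m).det * (G m).det = 1 := by
    rw [← Matrix.det_mul, FG, Matrix.det_one]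
  rw [h1, Matrix.det_mul, Matrix.det_mul, Matrix.det_diagonal]
  calc (F m).det * (∏ i, d i) * (G m).det
      = (∏ i, d i) * ((F m).det * (G m).det) := by ring
    _ = ∏ i, d i := by rw [h2, mul_one]

lemma inv_col (A : Matrix (ZMod m) (ZMod m) ℂ) (d : ZMod m → ℂ)
    (hA : A * F m = F m * Matrix.diagonal d) (hd : ∀ i, d i ≠ 0)
    (B : Matrix (ZMod m) (ZMod m) ℂ) (hB : A * B = 1) :
    B * F m = F m * Matrix.diagonal (fun i => (d i)⁻¹) := by
  have hBA : B * A = 1 := mul_eq_one_comm.1 hB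
  have hDD : Matrix.diagonal d * Matrix.diagonal (fun i => (d i)⁻¹) = 1 := by
    rw [Matrix.diagonal_mul_diagonal]
    have : (fun i => d i * (d i)⁻¹) = fun _ : ZMod m => (1:ℂ) := by
      funext i; exact mul_inv_cancel₀ (hd i)
    rw [this, Matrix.diagonal_one]
  have key : B * (A * F m) = F m := by rw [← Matrix.mul_assoc, hBA, Matrix.one_mul]
  rw [hA] at key
  calc B * F m = B * (F m * (Matrix.diagonal d * Matrix.diagonal (fun i => (d i)⁻¹))) := by
        rw [hDD, Matrix.mul_one]
    _ = B * (F m * Matrix.diagonal d) * Matrix.diagonal (fun i => (d i)⁻¹) := by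
        rw [Matrix.mul_assoc, Matrix.mul_assoc]
    _ = F m * Matrix.diagonal (fun i => (d i)⁻¹) := by rw [key]

lemma spec_eq (S : Matrix (ZMod m) (ZMod m) ℝ) (r : ZMod m → ℝ)
    (hS : S.map Complex.ofReal * F m = F m * Matrix.diagonal (fun i => (r i : ℂ))) :
    spectrum ℝ S = Set.range r := by
  have hdet : ∀ x : ℝ, ((((algebraMap ℝ (Matrix (ZMod m) (ZMod m) ℝ)) x - S).det : ℝ) : ℂ)
      = ∏ i, ((x : ℂ) - (r i : ℂ)) := by
    intro x
    have hmap : ((algebraMap ℝ (Matrix (ZMod m) (ZMod m) ℝ)) x - S).map Complex.ofReal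
        = (algebraMap ℂ (Matrix (ZMod m) (ZMod m) ℂ)) (x:ℂ) - S.map Complex.ofReal := by
      ext p q
      simp [Matrix.map_apply, Matrix.sub_apply, Matrix.algebraMap_matrix_apply, apply_ite]
    have heig : ((algebraMap ℝ (Matrix (ZMod m) (ZMod m) ℝ)) x - S).map Complex.ofReal * F m
        = F m * Matrix.diagonal (fun i => (x : ℂ) - (r i : ℂ)) := by
      rw [hmap, Matrix.sub_mul, hS]
      have hsc : (algebraMap ℂ (Matrix (ZMod m) (ZMod m) ℂ)) (x:ℂ) * F m
          = F m * Matrix.diagonal (fun _ : ZMod m => (x:ℂ)) := by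
        rw [Matrix.algebraMap_eq_diagonal]
        have h1 := Matrix.scalar_commute (n := ZMod m) (x:ℂ) (fun r' => Commute.all _ _) (F m)
        exact h1.eq
      rw [hsc, ← Matrix.mul_sub, ← Matrix.diagonal_sub]
    have := det_of_eig m _ _ heig
    rw [← this]
    exact RingHom.map_det Complex.ofRealHom _
  ext x
  rw [spectrum.mem_iff, Matrix.isUnit_iff_isUnit_det, isUnit_iff_ne_zero, not_not]
  constructor
  · intro hx
    have : ((((algebraMap ℝ (Matrix (ZMod m) (ZMod m) ℝ)) x - S).det : ℝ) : ℂ) = 0 := by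
      rw [hx]; simp
    rw [hdet x] at this
    obtain ⟨i, _, hi⟩ := Finset.prod_eq_zero_iff.1 this
    exact ⟨i, by
      have := sub_eq_zero.1 hi
      exact_mod_cast this.symm⟩
  · rintro ⟨i, rfl⟩
    have h0 : ∏ j, (((r i : ℝ) : ℂ) - (r j : ℂ)) = 0 :=
      Finset.prod_eq_zero (Finset.mem_univ i) (by simp)
    have := (hdet (r i)).trans h0
    exact_mod_cast this


lemma map_pow' (X : Matrix (ZMod m) (ZMod m) ℝ) (M : ℕ) :
    ((X ^ M).map Complex.ofReal) = (X.map Complex.ofReal) ^ M := by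
  exact map_pow (Complex.ofRealHom.mapMatrix) X M

lemma map_mul' (X Y : Matrix (ZMod m) (ZMod m) ℝ) :
    ((X * Y).map Complex.ofReal) = X.map Complex.ofReal * Y.map Complex.ofReal := by
  have := map_mul (Complex.ofRealHom.mapMatrix) X Y
  simp only [RingHom.mapMatrix_apply] at this
  exact this

lemma map_one' : ((1 : Matrix (ZMod m) (ZMod m) ℝ).map Complex.ofReal) = 1 :=
  Matrix.map_one _ Complex.ofReal_zero Complex.ofReal_one

/-- diagonalization of `1 - L² Δ`. -/
lemma smul_lap_F (L h : ℝ) (hh : h ≠ 0) :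
    ((1 - L ^ 2 • lap m h).map Complex.ofReal) * F m
      = F m * Matrix.diagonal (fun i => ((1 + 4 * (L / h) ^ 2 * s m i : ℝ) : ℂ)) := by
  have hmap : ((1 - L ^ 2 • lap m h).map Complex.ofReal)
      = 1 - ((L : ℂ) ^ 2) • ((lap m h).map Complex.ofReal) := by
    ext p q
    simp only [Matrix.map_apply, Matrix.sub_apply, Matrix.smul_apply, Matrix.one_apply,
      smul_eq_mul, apply_ite Complex.ofReal]
    split_ifs <;> push_cast <;> ring
  rw [hmap, Matrix.sub_mul, Matrix.one_mul, Matrix.smul_mul, lapF m h hh, ← Matrix.mul_smul]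
  have hfs : F m - F m * ((L:ℂ)^2 • Matrix.diagonal (fun i => ((-4 * s m i / h ^ 2 : ℝ) : ℂ)))
      = F m * (1 - (L:ℂ)^2 • Matrix.diagonal (fun i => ((-4 * s m i / h ^ 2 : ℝ) : ℂ))) := by
    rw [Matrix.mul_sub, Matrix.mul_one]
  rw [hfs]
  have hdiag : (1 : Matrix (ZMod m) (ZMod m) ℂ)
        - (L:ℂ)^2 • Matrix.diagonal (fun i => ((-4 * s m i / h ^ 2 : ℝ) : ℂ))
      = Matrix.diagonal (fun i => ((1 + 4 * (L / h) ^ 2 * s m i : ℝ) : ℂ)) := by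
    rw [← Matrix.diagonal_one, ← Matrix.diagonal_smul, Matrix.diagonal_sub]
    apply congrArg Matrix.diagonal
    funext i
    simp only [Pi.smul_apply, smul_eq_mul]
    push_cast
    field_simp
    ring
  rw [hdiag]

/-- diagonalization of `diffCov`, including invertibility of the matrix power. -/
lemma diffCov_F (σ ν L h : ℝ) (hh : h ≠ 0) (M : ℕ) :
    (diffCov m σ ν L h M).map Complex.ofReal * F m
      = F m * Matrix.diagonal
          (fun i => ((σ ^ 2 * ν * L / h / (1 + 4 * (L / h) ^ 2 * s m i) ^ M : ℝ) : ℂ)) := by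
  set X : Matrix (ZMod m) (ZMod m) ℝ := (1 - L ^ 2 • lap m h) ^ M with hX
  have hcpos : ∀ i, (0:ℝ) < 1 + 4 * (L / h) ^ 2 * s m i := by
    intro i
    have := (s_mem m i).1
    positivity
  have hXF : (X.map Complex.ofReal) * F m
      = F m * Matrix.diagonal (fun i => (((1 + 4 * (L / h) ^ 2 * s m i) ^ M : ℝ) : ℂ)) := by
    rw [hX, map_pow', conj_pow m _ _ (smul_lap_F m L h hh) M]
    congr 1
    congr 1
    funext i
    push_cast
    ring
  have hdet : IsUnit X.det := by
    rw [isUnit_iff_ne_zero]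
    intro h0
    have hdc : (X.map Complex.ofReal).det = ∏ i, (((1 + 4 * (L / h) ^ 2 * s m i) ^ M : ℝ) : ℂ) :=
      det_of_eig m _ _ hXF
    have hcast : ((X.det : ℝ) : ℂ) = (X.map Complex.ofReal).det :=
      RingHom.map_det Complex.ofRealHom _
    rw [h0] at hcast
    rw [hdc] at hcast
    have : ∏ i, (((1 + 4 * (L / h) ^ 2 * s m i) ^ M : ℝ) : ℂ) ≠ 0 := by
      apply Finset.prod_ne_zero_iff.2
      intro i _
      exact_mod_cast pow_ne_zero M (hcpos i).ne'
    exact this (by exact_mod_cast hcast.symm)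
  have hmul : X * X⁻¹ = 1 := Matrix.mul_nonsing_inv X hdet
  have hmulC : (X.map Complex.ofReal) * ((X⁻¹).map Complex.ofReal) = 1 := by
    rw [← map_mul', hmul, map_one']
  have hinvF := inv_col m (X.map Complex.ofReal) _ hXF
    (fun i => by exact_mod_cast pow_ne_zero M (hcpos i).ne') _ hmulC
  have hsm : (diffCov m σ ν L h M).map Complex.ofReal
      = ((σ ^ 2 * ν * L / h : ℝ) : ℂ) • ((X⁻¹).map Complex.ofReal) := by
    have hun : diffCov m σ ν L h M = (σ ^ 2 * ν * L / h) • X⁻¹ := by rw [hX]; rfl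
    rw [hun]
    ext p q
    simp [Matrix.map_apply, Matrix.smul_apply]
  rw [hsm, Matrix.smul_mul, hinvF, ← Matrix.mul_smul]
  apply congrArg (fun D => F m * D)
  ext i j
  by_cases hij : i = j <;>
    simp [Matrix.smul_apply, Matrix.diagonal_apply, hij, div_eq_mul_inv,
      Complex.ofReal_mul, Complex.ofReal_inv, Complex.ofReal_pow]

end Stmt12Aux

/-- For `S_o = I + R⁻¹ B_o` with circulant diffusion covariances as
before, if conditions (i) `L̃_o²M_o > L̃_{b/o}²M_b`, (ii) `M_o < M_b`,
(iii) `L̃_{b/o}²M_b - L̃_o²M_o > 4L̃_{b/o}²L̃_o²(M_o - M_b)` do NOT all hold, then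
`κ(S_o) ≤ 1 + α · max{(1+4L̃_o²)^{M_o}/(1+4L̃_{b/o}²)^{M_b}, 1}`. -/
theorem stmt12 (m : ℕ) [NeZero m]
    (σb νb Lb σo νo Lo ho : ℝ)
    (hσb : 0 < σb) (hνb : 0 < νb) (hLb : 0 < Lb)
    (hσo : 0 < σo) (hνo : 0 < νo) (hLo : 0 < Lo) (hho : 0 < ho)
    (Mb Mo : ℕ) (hMb : 0 < Mb) (hMo : 0 < Mo)
    (Bo R So : Matrix (ZMod m) (ZMod m) ℝ)
    (hBo : Bo = diffCov m σb νb Lb ho Mb) (hR : R = diffCov m σo νo Lo ho Mo)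
    (hSo : So = 1 + R⁻¹ * Bo)
    (hNot : ¬((Lo / ho) ^ 2 * Mo > (Lb / ho) ^ 2 * Mb ∧ Mo < Mb ∧
        (Lb / ho) ^ 2 * Mb - (Lo / ho) ^ 2 * Mo >
          4 * (Lb / ho) ^ 2 * (Lo / ho) ^ 2 * ((Mo : ℝ) - (Mb : ℝ)))) :
    condNum So ≤ 1 + (σb ^ 2 * νb * (Lb / ho) / (σo ^ 2 * νo * (Lo / ho))) *
      max ((1 + 4 * (Lo / ho) ^ 2) ^ Mo / (1 + 4 * (Lb / ho) ^ 2) ^ Mb) 1 := by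
  have hhone : ho ≠ 0 := hho.ne'
  have hBoF := Stmt12Aux.diffCov_F m σb νb Lb ho hhone Mb
  have hRF := Stmt12Aux.diffCov_F m σo νo Lo ho hhone Mo
  rw [← hBo] at hBoF
  rw [← hR] at hRF
  have hclo : ∀ i, (0:ℝ) < 1 + 4 * (Lo / ho) ^ 2 * Stmt12Aux.s m i := by
    intro i; have := (Stmt12Aux.s_mem m i).1; positivity
  have hclb : ∀ i, (0:ℝ) < 1 + 4 * (Lb / ho) ^ 2 * Stmt12Aux.s m i := by
    intro i; have := (Stmt12Aux.s_mem m i).1; positivity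
  have hcopos : (0:ℝ) < σo ^ 2 * νo * Lo / ho := by positivity
  have hcbpos : (0:ℝ) < σb ^ 2 * νb * Lb / ho := by positivity
  have hdR_ne : ∀ i, ((σo ^ 2 * νo * Lo / ho
      / (1 + 4 * (Lo / ho) ^ 2 * Stmt12Aux.s m i) ^ Mo : ℝ) : ℂ) ≠ 0 := by
    intro i
    exact Complex.ofReal_ne_zero.2 (div_pos hcopos (pow_pos (hclo i) Mo)).ne'
  -- R is invertible
  have hdetR : IsUnit R.det := by
    rw [isUnit_iff_ne_zero]
    intro h0
    have hdc := Stmt12Aux.det_of_eig m _ _ hRF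
    have hcast : ((R.det : ℝ) : ℂ) = (R.map Complex.ofReal).det :=
      RingHom.map_det Complex.ofRealHom _
    rw [h0, hdc] at hcast
    exact (Finset.prod_ne_zero_iff.2 fun i _ => hdR_ne i) (by exact_mod_cast hcast.symm)
  have hRmul : R * R⁻¹ = 1 := Matrix.mul_nonsing_inv R hdetR
  have hRmulC : R.map Complex.ofReal * (R⁻¹.map Complex.ofReal) = 1 := by
    rw [← Stmt12Aux.map_mul' m, hRmul, Stmt12Aux.map_one' m]
  have hRinvF := Stmt12Aux.inv_col m (R.map Complex.ofReal) _ hRF hdR_ne _ hRmulC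
  -- eigenvalues of So
  set r : ZMod m → ℝ := fun i => 1 + (σb ^ 2 * νb * (Lb / ho) / (σo ^ 2 * νo * (Lo / ho))) *
      ((1 + 4 * (Lo / ho) ^ 2 * Stmt12Aux.s m i) ^ Mo
        / (1 + 4 * (Lb / ho) ^ 2 * Stmt12Aux.s m i) ^ Mb) with hr
  have hSoF : So.map Complex.ofReal * Stmt12Aux.F m
      = Stmt12Aux.F m * Matrix.diagonal (fun i => ((r i : ℝ) : ℂ)) := by
    have h1 : (1 + R⁻¹ * Bo).map Complex.ofReal
        = 1 + (R⁻¹.map Complex.ofReal) * (Bo.map Complex.ofReal) := by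
      rw [← Stmt12Aux.map_mul' m]
      ext p q
      simp [Matrix.map_apply, Matrix.add_apply, Matrix.one_apply, apply_ite Complex.ofReal]
    rw [hSo, h1, Matrix.add_mul, Matrix.one_mul, Matrix.mul_assoc, hBoF, ← Matrix.mul_assoc,
      hRinvF, Matrix.mul_assoc, Matrix.diagonal_mul_diagonal]
    have hfd : ∀ X : Matrix (ZMod m) (ZMod m) ℂ,
        Stmt12Aux.F m + Stmt12Aux.F m * X = Stmt12Aux.F m * (1 + X) := by
      intro X; rw [Matrix.mul_add, Matrix.mul_one]
    rw [hfd, ← Matrix.diagonal_one, Matrix.diagonal_add]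
    apply congrArg (fun D => Stmt12Aux.F m * D)
    apply congrArg Matrix.diagonal
    funext i
    rw [← Complex.ofReal_inv, ← Complex.ofReal_mul, ← Complex.ofReal_one, ← Complex.ofReal_add]
    apply congrArg Complex.ofReal
    rw [hr]
    rw [inv_div]
    ring
  have hspec := Stmt12Aux.spec_eq m So r hSoF
  -- pointwise bounds on the eigenvalues
  have hα : (0:ℝ) ≤ σb ^ 2 * νb * (Lb / ho) / (σo ^ 2 * νo * (Lo / ho)) := by positivity
  have hnot' : ¬(0 < 4 * (Lo / ho) ^ 2 * Mo - 4 * (Lb / ho) ^ 2 * Mb ∧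
      4 * (Lo / ho) ^ 2 * Mo - 4 * (Lb / ho) ^ 2 * Mb +
        4 * (Lo / ho) ^ 2 * (4 * (Lb / ho) ^ 2) * ((Mo:ℝ) - (Mb:ℝ)) < 0) := by
    rintro ⟨h1, h2⟩
    apply hNot
    have hAB : (0:ℝ) < (Lo / ho) ^ 2 * (Lb / ho) ^ 2 := by positivity
    refine ⟨by nlinarith, ?_, by nlinarith⟩
    have hmm : (Mo:ℝ) < (Mb:ℝ) := by nlinarith
    exact_mod_cast hmm
  have hgB := gBound (4 * (Lo / ho) ^ 2) (4 * (Lb / ho) ^ 2) (by positivity) (by positivity)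
    Mo Mb hMo hMb hnot'
  have hub : ∀ i, r i ≤ 1 + (σb ^ 2 * νb * (Lb / ho) / (σo ^ 2 * νo * (Lo / ho))) *
      max ((1 + 4 * (Lo / ho) ^ 2) ^ Mo / (1 + 4 * (Lb / ho) ^ 2) ^ Mb) 1 := by
    intro i
    rw [hr]
    have := hgB (Stmt12Aux.s m i) (Stmt12Aux.s_mem m i)
    have h4 : (1 + 4 * (Lo / ho) ^ 2 * Stmt12Aux.s m i) ^ Mo
        / (1 + 4 * (Lb / ho) ^ 2 * Stmt12Aux.s m i) ^ Mb
      ≤ max ((1 + 4 * (Lo / ho) ^ 2) ^ Mo / (1 + 4 * (Lb / ho) ^ 2) ^ Mb) 1 := by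
      convert this using 3 <;> ring
    exact add_le_add_right (mul_le_mul_of_nonneg_left h4 hα) 1
  have hlb : ∀ i, (1:ℝ) ≤ r i := by
    intro i
    rw [hr]
    have h5 : (0:ℝ) ≤ (1 + 4 * (Lo / ho) ^ 2 * Stmt12Aux.s m i) ^ Mo
        / (1 + 4 * (Lb / ho) ^ 2 * Stmt12Aux.s m i) ^ Mb :=
      div_nonneg (pow_nonneg (hclo i).le Mo) (pow_nonneg (hclb i).le Mb)
    nlinarith
  -- conclude
  have hne : (Set.range r).Nonempty := ⟨r 0, 0, rfl⟩
  have hsup_le : sSup (Set.range r) ≤ 1 +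
      (σb ^ 2 * νb * (Lb / ho) / (σo ^ 2 * νo * (Lo / ho))) *
      max ((1 + 4 * (Lo / ho) ^ 2) ^ Mo / (1 + 4 * (Lb / ho) ^ 2) ^ Mb) 1 :=
    csSup_le hne (by rintro y ⟨i, rfl⟩; exact hub i)
  have hinf_ge : (1:ℝ) ≤ sInf (Set.range r) :=
    le_csInf hne (by rintro y ⟨i, rfl⟩; exact hlb i)
  have hsup_ge : (1:ℝ) ≤ sSup (Set.range r) :=
    le_trans (hlb 0) (le_csSup (Set.finite_range r).bddAbove ⟨0, rfl⟩)
  unfold condNum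
  rw [hspec]
  calc sSup (Set.range r) / sInf (Set.range r) ≤ sSup (Set.range r) :=
        div_le_self (by linarith) hinf_ge
    _ ≤ _ := hsup_le
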